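/- Let G be a finite simple graph on m vertices and p ∈ [0,1]. The graph state of G after uniform dephasing with parameter p on every qubit — i.e. the matrix with entries 2^{−m}(−1)^{q(x)+q(y)}(2p−1)^{d(x,y)} — has von Neumann entropy equal to m·S̄(p). -/

import Mathlib

open Finset

/-- The field with two elements. -/
abbrev F2 : Type := ZMod 2

/-- Hamming weight of a bit string. -/
def hamW {ι : Type*} [Fintype ι] (x : ι → F2) : ℕ :=
  (Finset.univ.filter fun i => x i ≠ 0).card

/-- Hamming distance between bit strings. -/
def hamD {ι : Type*} [Fintype ι] (x y : ι → F2) : ℕ :=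
  (Finset.univ.filter fun i => x i ≠ y i).card

/-- `(-1)^c` for `c ∈ F_2`. -/
noncomputable def chr (c : F2) : ℂ := (-1 : ℂ) ^ c.val

/-- `q(x) = Σ_{{u,v} ∈ E} x_u x_v (mod 2)`. -/
def qform {V : Type*} [Fintype V] [DecidableEq V] (G : SimpleGraph V) [DecidableRel G.Adj]
    (x : V → F2) : F2 :=
  ∑ e ∈ G.edgeFinset, Sym2.lift ⟨fun u v => x u * x v, fun u v => mul_comm _ _⟩ e

/-- The graph state of `G` after uniform dephasing with parameter `p` on every qubit:
entries `2^{-m} (-1)^{q(x)+q(y)} (2p-1)^{d(x,y)}`. -/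
noncomputable def graphDeph {V : Type*} [Fintype V] [DecidableEq V] (G : SimpleGraph V)
    [DecidableRel G.Adj] (p : ℝ) : Matrix (V → F2) (V → F2) ℂ :=
  Matrix.of fun x y =>
    ((2 : ℂ) ^ Fintype.card V)⁻¹ * chr (qform G x + qform G y) *
      ((2 * p - 1 : ℝ) : ℂ) ^ hamD x y

/-- Binary entropy `S̄(p)`, base 2. -/
noncomputable def binEnt (p : ℝ) : ℝ := -(p * Real.logb 2 p) - (1 - p) * Real.logb 2 (1 - p)

/-- Shannon entropy (base 2) of a (finitely supported) real vector, with `0·log₂ 0 = 0`. -/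
noncomputable def shannonEnt {ι : Sort*} (q : ι → ℝ) : ℝ := -∑ᶠ i, q i * Real.logb 2 (q i)

/-- von Neumann entropy (base 2): the Shannon entropy of the eigenvalue vector. -/
noncomputable def vnEnt {n : Type*} [Fintype n] [DecidableEq n] {ρ : Matrix n n ℂ}
    (h : ρ.IsHermitian) : ℝ :=
  -∑ i, h.eigenvalues i * Real.logb 2 (h.eigenvalues i)

/-- The distribution induced on the coset space `M ⧸ K` by a weight `w` on `M`:
`c ↦ Σ_{v ∈ c} w(v)`. -/
noncomputable def synd {M : Type*} [AddCommGroup M] [Module F2 M] (K : Submodule F2 M)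
    (w : M → ℝ) (c : M ⧸ K) : ℝ :=
  ∑ᶠ v ∈ {v : M | (Submodule.Quotient.mk v : M ⧸ K) = c}, w v


/- ===== auxiliary machinery ===== -/

open Polynomial Matrix in
private lemma charpoly_mul_diag_mul {n R : Type*} [Fintype n] [DecidableEq n] [CommRing R]
    (P Q : Matrix n n R) (d : n → R) (h : P * Q = 1) :
    (P * Matrix.diagonal d * Q).charpoly = ∏ i, (X - C (d i)) := by
  have hdet : (P.map C) * (Q.map C) = 1 := by
    rw [← Matrix.map_mul, h]; ext i j; simp [Matrix.one_apply, apply_ite]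
  have key : P.map C * charmatrix (diagonal d) * Q.map C
      = charmatrix (P * diagonal d * Q) := by
    rw [charmatrix, charmatrix, Matrix.mul_sub, Matrix.sub_mul]
    congr 1
    · rw [← (Matrix.scalar_commute (X : R[X]) (Commute.all X) (P.map C)).eq, mul_assoc, hdet,
        mul_one]
    · simp only [RingHom.mapMatrix_apply, ← Matrix.map_mul]
  rw [Matrix.charpoly, ← key, det_mul, det_mul, mul_comm (det _), mul_assoc, ← det_mul, hdet,
    det_one, mul_one]
  rw [charmatrix]
  simp only [RingHom.mapMatrix_apply, Matrix.diagonal_map (by simp : (C : R →+* R[X]) 0 = 0),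
    scalar_apply, diagonal_sub, det_diagonal]

open Polynomial in
private lemma aux_prod_X_sub_C {γ : Type*} [Fintype γ] (u : γ → ℝ) :
    (∏ a : γ, (X - C ((u a : ℂ)))) = ((univ.val.map fun a => ((u a : ℂ))).map
      fun r => X - C r).prod := by
  rw [Multiset.map_map]; rfl

private lemma aux_sum_comp {γ : Type*} [Fintype γ] (u : γ → ℝ) (F : ℝ → ℝ) :
    ∑ a : γ, F (u a) = ((univ.val.map u).map F).sum := by
  rw [Multiset.map_map]; rfl

open Polynomial in
private lemma sum_comp_eq_of_prod_X_sub_C {α β : Type*} [Fintype α] [Fintype β]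
    {f : α → ℝ} {g : β → ℝ}
    (h : ∏ a, (X - C ((f a : ℂ))) = ∏ b, (X - C ((g b : ℂ)))) (F : ℝ → ℝ) :
    ∑ a, F (f a) = ∑ b, F (g b) := by
  have key : (univ.val.map fun a => ((f a : ℂ))) = (univ.val.map fun b => ((g b : ℂ))) := by
    have h2 := congrArg Polynomial.roots h
    rwa [aux_prod_X_sub_C f, aux_prod_X_sub_C g, Polynomial.roots_multiset_prod_X_sub_C,
      Polynomial.roots_multiset_prod_X_sub_C] at h2
  have key2 : (univ.val.map f) = (univ.val.map g) := by
    have h3 := congrArg (Multiset.map Complex.re) key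
    simpa [Multiset.map_map, Function.comp] using h3
  rw [aux_sum_comp f F, aux_sum_comp g F, key2]

private lemma F2.cases : ∀ a : F2, a = 0 ∨ a = 1 := by decide

private lemma chr_zero : chr 0 = 1 := by simp [chr]

private lemma chr_one : chr 1 = -1 := by
  show ((-1 : ℂ)) ^ (1 : ZMod 2).val = -1
  rw [ZMod.val_one]; simp

private lemma chr_add (a b : F2) : chr (a + b) = chr a * chr b := by
  rcases F2.cases a with ha | ha <;> rcases F2.cases b with hb | hb <;>
      subst ha <;> subst hb <;> norm_num [chr_zero, chr_one]
  show chr 0 = 1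
  exact chr_zero

private lemma chr_mul_self (a : F2) : chr a * chr a = 1 := by
  rcases F2.cases a with ha | ha <;> subst ha <;> simp [chr_zero, chr_one]

private lemma chr_sum {ι : Type*} (s : Finset ι) (f : ι → F2) :
    chr (∑ i ∈ s, f i) = ∏ i ∈ s, chr (f i) := by
  classical
  induction s using Finset.cons_induction with
  | empty => simp [chr_zero]
  | cons a s ha ih => rw [Finset.sum_cons, Finset.prod_cons, chr_add, ih]

private lemma F2.sum_eq {M : Type*} [AddCommMonoid M] (f : F2 → M) : ∑ c, f c = f 0 + f 1 := by
  have h : (univ : Finset F2) = {0, 1} := by decide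
  rw [h, Finset.sum_insert (by decide), Finset.sum_singleton]

private lemma F2.add_eq_zero_iff : ∀ a b : F2, (a + b = 0 ↔ a = b) := by decide

/-- inner product over F2 -/
private def ip {V : Type*} [Fintype V] (x z : V → F2) : F2 := ∑ i, x i * z i

section auxV
variable {V : Type*} [Fintype V] [DecidableEq V]

private lemma ip_add_left (x y z : V → F2) : ip (x + y) z = ip x z + ip y z := by
  simp [ip, add_mul, Finset.sum_add_distrib]

private lemma sum_chr_ip (a : V → F2) :
    ∑ z : V → F2, chr (ip a z) = if a = 0 then (2 : ℂ) ^ Fintype.card V else 0 := by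
  have h1 : ∀ z : V → F2, chr (ip a z) = ∏ i, chr (a i * z i) := fun z => chr_sum _ _
  simp only [h1]
  rw [← Fintype.prod_sum (fun i c => chr (a i * c))]
  have h2 : ∀ i : V, ∑ c : F2, chr (a i * c) = if a i = 0 then 2 else 0 := by
    intro i
    rw [F2.sum_eq]
    rcases F2.cases (a i) with h | h <;> norm_num [h, chr_zero, chr_one]
  simp only [h2]
  by_cases ha : a = 0
  · simp [ha, Finset.card_univ]
  · obtain ⟨i, hi⟩ : ∃ i, a i ≠ 0 := by
      by_contra hc
      push_neg at hc
      exact ha (funext hc)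
    rw [Finset.prod_eq_zero (Finset.mem_univ i) (by simp [hi]), if_neg ha]

private lemma hamW_add_eq_hamD (x y : V → F2) : hamW (x + y) = hamD x y := by
  unfold hamW hamD
  congr 1
  apply Finset.filter_congr
  intro i _
  simp only [Pi.add_apply, ne_eq, not_iff_not]
  exact F2.add_eq_zero_iff _ _

private lemma sum_chr_ip_mul (p : ℝ) (a : V → F2) :
    ∑ z : V → F2, chr (ip a z) * (∏ i, (if z i = 0 then (p : ℂ) else (1 - p : ℂ)))
      = ((2 * p - 1 : ℝ) : ℂ) ^ hamW a := by
  have h1 : ∀ z : V → F2, chr (ip a z) * (∏ i, (if z i = 0 then (p : ℂ) else (1 - p : ℂ)))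
      = ∏ i, (chr (a i * z i) * (if z i = 0 then (p : ℂ) else (1 - p : ℂ))) := by
    intro z
    rw [Finset.prod_mul_distrib, ← chr_sum]
    rfl
  simp only [h1]
  rw [← Fintype.prod_sum (fun i c => chr (a i * c) * (if c = 0 then (p : ℂ) else (1 - p : ℂ)))]
  have h2 : ∀ i : V, (∑ c : F2, chr (a i * c) * (if c = 0 then (p : ℂ) else (1 - p : ℂ)))
      = if a i = 0 then 1 else ((2 * p - 1 : ℝ) : ℂ) := by
    intro i
    rw [F2.sum_eq]
    rcases F2.cases (a i) with h | h <;>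
      · simp only [h, if_pos rfl, if_neg (by decide : ¬(1 : F2) = 0), zero_mul, one_mul,
          mul_zero, mul_one, chr_zero, chr_one]
        push_cast
        ring
  simp only [h2]
  rw [← Finset.prod_filter_mul_prod_filter_not univ (fun i => a i = 0)]
  rw [Finset.prod_congr rfl (fun i hi => if_pos (Finset.mem_filter.mp hi).2),
    Finset.prod_congr rfl (fun i hi => if_neg (Finset.mem_filter.mp hi).2)]
  simp [hamW, Finset.prod_const]

variable (G : SimpleGraph V) [DecidableRel G.Adj] (p : ℝ)

/-- left factor of the diagonalization -/
private noncomputable def Wl : Matrix (V → F2) (V → F2) ℂ :=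
  Matrix.of fun x z => chr (qform G x) * chr (ip x z)

/-- right factor of the diagonalization -/
private noncomputable def Wr : Matrix (V → F2) (V → F2) ℂ :=
  Matrix.of fun z y => ((2 : ℂ) ^ Fintype.card V)⁻¹ * chr (ip y z) * chr (qform G y)

/-- the diagonal entries -/
private noncomputable def lamC (p : ℝ) (z : V → F2) : ℂ :=
  ∏ i, (if z i = 0 then (p : ℂ) else (1 - p : ℂ))

private lemma cross_sum (x y : V → F2) (f : (V → F2) → ℂ) :
    ∑ z, Wl G x z * f z * Wr G z y
      = chr (qform G x) * chr (qform G y) * ((2 : ℂ) ^ Fintype.card V)⁻¹ *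
        ∑ z, chr (ip (x + y) z) * f z := by
  rw [Finset.mul_sum]
  apply Finset.sum_congr rfl
  intro z _
  simp only [Wl, Wr, Matrix.of_apply]
  rw [ip_add_left, chr_add]
  ring

private lemma Wl_mul_Wr : Wl G * Wr G = 1 := by
  ext x y
  rw [Matrix.mul_apply]
  have h0 := cross_sum G x y (fun _ => 1)
  simp only [mul_one] at h0
  rw [h0, sum_chr_ip]
  by_cases hxy : x = y
  · subst hxy
    rw [if_pos (by funext i; exact (F2.add_eq_zero_iff _ _).mpr rfl), Matrix.one_apply_eq,
      mul_assoc, inv_mul_cancel₀ (pow_ne_zero _ two_ne_zero), mul_one, chr_mul_self]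
  · rw [if_neg, Matrix.one_apply_ne hxy, mul_zero]
    intro hc
    apply hxy
    funext i
    exact (F2.add_eq_zero_iff _ _).mp (congrFun hc i)

private lemma graphDeph_decomp :
    graphDeph G p = Wl G * (Matrix.diagonal (lamC p)) * Wr G := by
  ext x y
  rw [Matrix.mul_assoc, Matrix.mul_apply]
  simp only [Matrix.diagonal_mul, ← mul_assoc]
  rw [cross_sum G x y (lamC p)]
  have h3 : ∑ z, chr (ip (x + y) z) * lamC p z = ((2 * p - 1 : ℝ) : ℂ) ^ hamD x y := by
    simpa only [lamC, hamW_add_eq_hamD] using sum_chr_ip_mul p (x + y)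
  rw [h3]
  simp only [graphDeph, Matrix.of_apply, chr_add]
  ring

private lemma sum_lam_logb :
    ∑ z : V → F2, (∏ i, (if z i = 0 then p else 1 - p)) *
        Real.logb 2 (∏ i, (if z i = 0 then p else 1 - p))
      = (Fintype.card V) * (p * Real.logb 2 p + (1 - p) * Real.logb 2 (1 - p)) := by
  have step1 : ∀ z : V → F2, (∏ i, (if z i = 0 then p else 1 - p)) *
      Real.logb 2 (∏ i, (if z i = 0 then p else 1 - p))
      = ∑ i, (∏ j, (if z j = 0 then p else 1 - p)) *
          Real.logb 2 (if z i = 0 then p else 1 - p) := by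
    intro z
    by_cases hz : ∀ i : V, (if z i = 0 then p else 1 - p) ≠ 0
    · rw [Real.logb_prod _ _ (fun i _ => hz i), Finset.mul_sum]
    · push_neg at hz
      obtain ⟨i0, hi0⟩ := hz
      have hzero : (∏ i, (if z i = 0 then p else 1 - p)) = 0 :=
        Finset.prod_eq_zero (Finset.mem_univ i0) hi0
      rw [hzero]
      simp
  simp only [step1]
  rw [Finset.sum_comm]
  have step2 : ∀ i : V, ∑ z : V → F2, (∏ j, (if z j = 0 then p else 1 - p)) *
      Real.logb 2 (if z i = 0 then p else 1 - p)
      = p * Real.logb 2 p + (1 - p) * Real.logb 2 (1 - p) := by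
    intro i
    have h1 : ∀ z : V → F2, (∏ j, (if z j = 0 then p else 1 - p)) *
        Real.logb 2 (if z i = 0 then p else 1 - p)
        = ∏ j, ((if z j = 0 then p else 1 - p) *
            (if j = i then Real.logb 2 (if z j = 0 then p else 1 - p) else 1)) := by
      intro z
      rw [Finset.prod_mul_distrib, Fintype.prod_ite_eq']
    simp only [h1]
    rw [← Fintype.prod_sum (fun j c => (if c = 0 then p else 1 - p) *
        (if j = i then Real.logb 2 (if c = 0 then p else 1 - p) else 1))]
    have h2 : ∀ j : V, (∑ c : F2, (if c = 0 then p else 1 - p) *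
        (if j = i then Real.logb 2 (if c = 0 then p else 1 - p) else 1))
        = if j = i then p * Real.logb 2 p + (1 - p) * Real.logb 2 (1 - p) else 1 := by
      intro j
      rw [F2.sum_eq]
      simp only [eq_self_iff_true, if_true, if_pos rfl, if_neg (by decide : ¬(1 : F2) = 0)]
      by_cases hj : j = i
      · rw [if_pos hj, if_pos hj, if_pos hj]
      · rw [if_neg hj, if_neg hj, if_neg hj, mul_one, mul_one]
        ring
    simp only [h2]
    rw [Fintype.prod_ite_eq' i
      (fun _ => p * Real.logb 2 p + (1 - p) * Real.logb 2 (1 - p))]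
  simp only [step2]
  rw [Finset.sum_const, Finset.card_univ, nsmul_eq_mul]

end auxV

/-- The graph state of a graph on `m` vertices after uniform dephasing with parameter `p` on
every qubit has von Neumann entropy `m · S̄(p)`. -/
theorem entropy_dephased_graph_state (m : ℕ) (G : SimpleGraph (Fin m)) [DecidableRel G.Adj]
    (p : ℝ) (hp : p ∈ Set.Icc (0 : ℝ) 1)
    (hherm : (graphDeph G p).IsHermitian) :
    vnEnt hherm = m * binEnt p := by
  classical
  have hU : (hherm.eigenvectorUnitary : Matrix (Fin m → F2) (Fin m → F2) ℂ) *
      star (hherm.eigenvectorUnitary : Matrix (Fin m → F2) (Fin m → F2) ℂ) = 1 :=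
    Matrix.mem_unitaryGroup_iff.mp hherm.eigenvectorUnitary.2
  have h1 : (graphDeph G p).charpoly
      = ∏ i : (Fin m → F2), (Polynomial.X - Polynomial.C ((hherm.eigenvalues i : ℂ))) := by
    conv_lhs => rw [hherm.spectral_theorem]
    exact charpoly_mul_diag_mul _ _ _ hU
  have h2 : (graphDeph G p).charpoly
      = ∏ z : (Fin m → F2), (Polynomial.X -
          Polynomial.C (((∏ i, (if z i = 0 then p else 1 - p)) : ℝ) : ℂ)) := by
    conv_lhs => rw [graphDeph_decomp G p]
    rw [charpoly_mul_diag_mul _ _ _ (Wl_mul_Wr G)]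
    apply Finset.prod_congr rfl
    intro z _
    congr 1
    simp [lamC, Complex.ofReal_prod, apply_ite (fun r : ℝ => (r : ℂ))]
  have h3 := sum_comp_eq_of_prod_X_sub_C (h1.symm.trans h2)
    (fun t => t * Real.logb 2 t)
  have h4 := sum_lam_logb (V := Fin m) p
  rw [vnEnt, h3, h4, Fintype.card_fin, binEnt]
  ring
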